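/- Two developing maps γ₁, γ₂ with equal lifted monodromy h̃ differ by a ℤ-equivariant diffeomorphism: there exists F: ℝ → ℝ, a diffeomorphism with F(x+1) = F(x)+1, such that γ₂ = γ₁ ∘ F⁻¹. -/

import Mathlib

open Real

/-- `h : ℝ → ℝ` is the lift to `ℝ = RP~(1)` of the projective action of a matrix
`M ∈ SL(2,ℝ)` on `RP(1) = ℝ/πℤ`. -/
def IsMoebiusLift (h : ℝ → ℝ) (M : Matrix (Fin 2) (Fin 2) ℝ) : Prop :=
  StrictMono h ∧ Continuous h ∧ Function.Surjective h ∧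
  (∀ x, h (x + π) = h x + π) ∧ M.det = 1 ∧
  ∀ x, ∃ c : ℝ, c ≠ 0 ∧
    Real.sin (h x) = c * (M 0 0 * Real.sin x + M 0 1 * Real.cos x) ∧
    Real.cos (h x) = c * (M 1 0 * Real.sin x + M 1 1 * Real.cos x)

private lemma trig_lin_indep0 {β γ u v : ℝ} (h1 : β * Real.cos u - γ * Real.sin u = 0)
    (h2 : β * Real.cos v - γ * Real.sin v = 0) (hs : Real.sin (u - v) ≠ 0) :
    β = 0 ∧ γ = 0 := by
  have hsv : Real.sin u * Real.cos v - Real.cos u * Real.sin v ≠ 0 := by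
    rwa [← Real.sin_sub]
  constructor
  · have hb : β * (Real.sin u * Real.cos v - Real.cos u * Real.sin v) = 0 := by
      linear_combination (- Real.sin v) * h1 + Real.sin u * h2
    rcases mul_eq_zero.1 hb with h | h
    · exact h
    · exact absurd h hsv
  · have hg : γ * (Real.sin u * Real.cos v - Real.cos u * Real.sin v) = 0 := by
      linear_combination (- Real.cos v) * h1 + Real.cos u * h2
    rcases mul_eq_zero.1 hg with h | h
    · exact h
    · exact absurd h hsv

private lemma zeros_pair0 {α β γ x y : ℝ}
    (hx : α + β * Real.sin (2 * x) + γ * Real.cos (2 * x) = 0)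
    (hy : α + β * Real.sin (2 * y) + γ * Real.cos (2 * y) = 0)
    (hs : Real.sin (x - y) ≠ 0) :
    β * Real.cos (x + y) - γ * Real.sin (x + y) = 0 := by
  have e1 := Real.sin_sub_sin (2 * x) (2 * y)
  have e2 := Real.cos_sub_cos (2 * x) (2 * y)
  rw [show (2 * x - 2 * y) / 2 = x - y by ring, show (2 * x + 2 * y) / 2 = x + y by ring] at e1 e2
  have key : Real.sin (x - y) * (2 * (β * Real.cos (x + y) - γ * Real.sin (x + y))) = 0 := by
    linear_combination hx - hy - β * e1 - γ * e2
  rcases mul_eq_zero.1 key with h | h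
  · exact absurd h hs
  · linarith

private lemma sin_ne_zero_Ioo {t : ℝ} (h0 : 0 < t) (hπ : t < π) : Real.sin t ≠ 0 :=
  ne_of_gt (Real.sin_pos_of_pos_of_lt_pi h0 hπ)

private lemma three_zeros0 {α β γ x₁ x₂ x₃ : ℝ} (h12 : x₁ < x₂) (h23 : x₂ < x₃)
    (h13 : x₃ - x₁ < π)
    (hz1 : α + β * Real.sin (2 * x₁) + γ * Real.cos (2 * x₁) = 0)
    (hz2 : α + β * Real.sin (2 * x₂) + γ * Real.cos (2 * x₂) = 0)
    (hz3 : α + β * Real.sin (2 * x₃) + γ * Real.cos (2 * x₃) = 0) :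
    α = 0 ∧ β = 0 ∧ γ = 0 := by
  have hs12 : Real.sin (x₂ - x₁) ≠ 0 := sin_ne_zero_Ioo (by linarith) (by linarith)
  have hs13 : Real.sin (x₃ - x₁) ≠ 0 := sin_ne_zero_Ioo (by linarith) (by linarith)
  have hp1 : β * Real.cos (x₂ + x₁) - γ * Real.sin (x₂ + x₁) = 0 := by
    have := zeros_pair0 hz2 hz1 hs12
    linarith [this]
  have hp2 : β * Real.cos (x₃ + x₁) - γ * Real.sin (x₃ + x₁) = 0 := by
    have := zeros_pair0 hz3 hz1 hs13
    linarith [this]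
  have hsd : Real.sin ((x₂ + x₁) - (x₃ + x₁)) ≠ 0 := by
    rw [show (x₂ + x₁) - (x₃ + x₁) = -(x₃ - x₂) by ring, Real.sin_neg]
    simpa using sin_ne_zero_Ioo (t := x₃ - x₂) (by linarith) (by linarith)
  obtain ⟨hb, hg⟩ := trig_lin_indep0 hp1 hp2 hsd
  refine ⟨?_, hb, hg⟩
  rw [hb, hg] at hz1; linarith

private lemma two_zeros0 {α β γ x₁ x₂ : ℝ} (h12 : x₁ < x₂) (h13 : x₂ - x₁ < π)
    (hz1 : α + β * Real.sin (2 * x₁) + γ * Real.cos (2 * x₁) = 0)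
    (hz2 : α + β * Real.sin (2 * x₂) + γ * Real.cos (2 * x₂) = 0)
    (hd : β * Real.cos (2 * x₂) - γ * Real.sin (2 * x₂) = 0) :
    α = 0 ∧ β = 0 ∧ γ = 0 := by
  have hs12 : Real.sin (x₂ - x₁) ≠ 0 := sin_ne_zero_Ioo (by linarith) (by linarith)
  have hp1 : β * Real.cos (x₂ + x₁) - γ * Real.sin (x₂ + x₁) = 0 := by
    have := zeros_pair0 hz2 hz1 hs12; linarith [this]
  have hsd : Real.sin ((2 * x₂) - (x₂ + x₁)) ≠ 0 := by
    rw [show (2 * x₂) - (x₂ + x₁) = x₂ - x₁ by ring]; exact hs12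
  obtain ⟨hb, hg⟩ := trig_lin_indep0 hd hp1 hsd
  refine ⟨?_, hb, hg⟩
  rw [hb, hg] at hz1; linarith

private lemma h_int0 {h : ℝ → ℝ} (hπ : ∀ x, h (x + π) = h x + π) :
    ∀ (n : ℤ) (x : ℝ), h (x + n * π) = h x + n * π := by
  intro n
  induction n using Int.induction_on with
  | zero => simp
  | succ k ih =>
    intro x
    have h1 : x + ((k : ℤ) + 1 : ℤ) * π = (x + (k : ℤ) * π) + π := by push_cast; ring
    rw [h1, hπ, ih]; push_cast; ring
  | pred k ih =>
    intro x
    have h1 : x + (-(k : ℤ) - 1 : ℤ) * π + π = x + (-(k : ℤ) : ℤ) * π := by push_cast; ring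
    have h2 := hπ (x + (-(k : ℤ) - 1 : ℤ) * π)
    rw [h1, ih] at h2
    push_cast at h2 ⊢
    linarith

private lemma sign_const0 {cc : ℝ → ℝ} (hc : Continuous cc) (h0 : ∀ x, cc x ≠ 0) :
    ∃ ε : ℝ, ε ≠ 0 ∧ ∀ x, 0 < ε * cc x := by
  have key : ∀ u v : ℝ, cc u < 0 → 0 < cc v → False := by
    intro u v hu hv
    have h1 : (0 : ℝ) ∈ Set.uIcc (cc u) (cc v) :=
      Set.mem_uIcc.2 (Or.inl ⟨le_of_lt hu, le_of_lt hv⟩)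
    obtain ⟨y, _, hy⟩ := intermediate_value_uIcc (a := u) (b := v) hc.continuousOn h1
    exact h0 y hy
  rcases lt_or_gt_of_ne (h0 0) with hneg | hpos
  · exact ⟨-1, by norm_num, fun x => by
      rcases lt_or_gt_of_ne (h0 x) with hx | hx
      · nlinarith
      · exact absurd (key 0 x hneg hx) (by simp)⟩
  · exact ⟨1, one_ne_zero, fun x => by
      rcases lt_or_gt_of_ne (h0 x) with hx | hx
      · exact absurd (key x 0 hx hpos) (by simp)
      · nlinarith⟩

private lemma interval_unique0 {h : ℝ → ℝ}
    (hhm : StrictMono h) (hπ : ∀ x, h (x + π) = h x + π)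
    (hcc : ∃ (α β γ : ℝ) (cc : ℝ → ℝ), Continuous cc ∧ ∀ x, cc x ≠ 0 ∧
      Real.sin (h x - x) = cc x * (α + β * Real.sin (2 * x) + γ * Real.cos (2 * x)))
    {a₁ b₁ a₂ b₂ : ℝ}
    (hfa₁ : h a₁ = a₁) (hfb₁ : h b₁ = b₁) (hfa₂ : h a₂ = a₂) (hfb₂ : h b₂ = b₂)
    (hab₁ : a₁ < b₁) (hb₁pi : b₁ ≤ a₁ + π) (hab₂ : a₂ < b₂) (hb₂pi : b₂ ≤ a₂ + π)
    (hgt₁ : ∀ x ∈ Set.Ioo a₁ b₁, x < h x) (hgt₂ : ∀ x ∈ Set.Ioo a₂ b₂, x < h x) :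
    ∃ n : ℤ, a₂ = a₁ + n * π ∧ b₂ = b₁ + n * π := by
  obtain ⟨α, β, γ, cc, hccc, hccp⟩ := hcc
  have hpi := Real.pi_pos
  set m : ℤ := -⌊(a₂ - a₁) / π⌋ with hm
  set a : ℝ := a₂ + (m : ℝ) * π with hadef
  set b : ℝ := b₂ + (m : ℝ) * π with hbdef
  have hfloor1 : ((⌊(a₂ - a₁) / π⌋ : ℤ) : ℝ) ≤ (a₂ - a₁) / π := Int.floor_le _
  have hfloor2 : (a₂ - a₁) / π < (⌊(a₂ - a₁) / π⌋ : ℤ) + 1 := Int.lt_floor_add_one _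
  have hmr : (m : ℝ) = -((⌊(a₂ - a₁) / π⌋ : ℤ) : ℝ) := by rw [hm]; push_cast; ring
  have haa : a₁ ≤ a := by
    rw [hadef, hmr]
    have h1 : ((⌊(a₂ - a₁) / π⌋ : ℤ) : ℝ) * π ≤ (a₂ - a₁) / π * π :=
      mul_le_mul_of_nonneg_right hfloor1 (le_of_lt hpi)
    rw [div_mul_cancel₀ _ (ne_of_gt hpi)] at h1
    linarith
  have hlt : a < a₁ + π := by
    rw [hadef, hmr]
    have h1 : (a₂ - a₁) / π * π < (((⌊(a₂ - a₁) / π⌋ : ℤ) : ℝ) + 1) * π :=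
      mul_lt_mul_of_pos_right hfloor2 hpi
    rw [div_mul_cancel₀ _ (ne_of_gt hpi)] at h1
    linarith
  have hfa : h a = a := by rw [hadef, h_int0 hπ m a₂, hfa₂]
  have hfb : h b = b := by rw [hbdef, h_int0 hπ m b₂, hfb₂]
  have hab : a < b := by rw [hadef, hbdef]; linarith
  have hbpi : b ≤ a + π := by rw [hadef, hbdef]; linarith
  have hgt : ∀ x ∈ Set.Ioo a b, x < h x := by
    intro x hx
    have hmem : x + ((-m : ℤ) : ℝ) * π ∈ Set.Ioo a₂ b₂ := by
      constructor
      · rw [hadef] at hx; push_cast; linarith [hx.1]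
      · rw [hbdef] at hx; push_cast; linarith [hx.2]
    have h3 := hgt₂ _ hmem
    rw [h_int0 hπ (-m) x] at h3
    push_cast at h3
    linarith
  have hQ0 : ∀ x, h x = x → α + β * Real.sin (2 * x) + γ * Real.cos (2 * x) = 0 := by
    intro x hx
    obtain ⟨hc0, hid⟩ := hccp x
    rw [hx, sub_self, Real.sin_zero] at hid
    exact (mul_eq_zero.1 hid.symm).resolve_left hc0
  have hsin1 : ∀ x ∈ Set.Ioo a₁ b₁, 0 < Real.sin (h x - x) := by
    intro x hx
    have h1 := hgt₁ x hx
    have h2 : h x < b₁ := by rw [← hfb₁]; exact hhm hx.2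
    exact Real.sin_pos_of_pos_of_lt_pi (by linarith) (by linarith [hx.1])
  have hsin2 : ∀ x ∈ Set.Ioo a b, 0 < Real.sin (h x - x) := by
    intro x hx
    have h1 := hgt x hx
    have h2 : h x < b := by rw [← hfb]; exact hhm hx.2
    exact Real.sin_pos_of_pos_of_lt_pi (by linarith) (by linarith [hx.1])
  have ht₀ : (a₁ + b₁) / 2 ∈ Set.Ioo a₁ b₁ := ⟨by linarith, by linarith⟩
  have hQt₀ : α + β * Real.sin (2 * ((a₁ + b₁) / 2)) + γ * Real.cos (2 * ((a₁ + b₁) / 2)) ≠ 0 := by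
    intro h0
    obtain ⟨hc0, hid⟩ := hccp ((a₁ + b₁) / 2)
    rw [h0, mul_zero] at hid
    exact absurd hid (ne_of_gt (hsin1 _ ht₀))
  have key : a = a₁ := by
    by_contra hne
    have haa' : a₁ < a := lt_of_le_of_ne haa (Ne.symm hne)
    have h1 : b₁ ≤ a := by
      by_contra hh
      push_neg at hh
      have := hgt₁ a ⟨haa', hh⟩
      rw [hfa] at this
      exact lt_irrefl _ this
    have h2 : b ≤ a₁ + π := by
      by_contra hh
      push_neg at hh
      have hmem : a₁ + π ∈ Set.Ioo a b := ⟨hlt, hh⟩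
      have h3 := hgt _ hmem
      rw [hπ, hfa₁] at h3
      exact lt_irrefl _ h3
    rcases eq_or_lt_of_le h1 with heq | hlt3
    · -- b₁ = a : derivative case
      obtain ⟨ε, hε0, hsign⟩ := sign_const0 hccc (fun x => (hccp x).1)
      set P : ℝ → ℝ := fun x => ε * (α + β * Real.sin (2 * x) + γ * Real.cos (2 * x)) with hP
      have hPpos : ∀ x, 0 < Real.sin (h x - x) → 0 < P x := by
        intro x hs
        obtain ⟨hc0, hid⟩ := hccp x
        have e1 : (ε * cc x) * Real.sin (h x - x) = cc x ^ 2 * P x := by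
          rw [hid, hP]; ring
        have e2 : 0 < (ε * cc x) * Real.sin (h x - x) := mul_pos (hsign x) hs
        rw [e1] at e2
        nlinarith [sq_nonneg (cc x), e2]
      have hPb₁ : P b₁ = 0 := by
        rw [hP]
        have h0 := hQ0 b₁ hfb₁
        simp only []
        rw [h0, mul_zero]
      have hmin : IsLocalMin P b₁ := by
        have hmem : Set.Ioo a₁ b ∈ nhds b₁ := Ioo_mem_nhds hab₁ (heq ▸ hab)
        refine Filter.eventually_of_mem hmem ?_
        intro x hx
        rcases lt_trichotomy x b₁ with hxlt | hxeq | hxgt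
        · have := hPpos x (hsin1 x ⟨hx.1, hxlt⟩)
          rw [hPb₁]; linarith
        · rw [hxeq, hPb₁]
        · have hx2 : x ∈ Set.Ioo a b := ⟨heq ▸ hxgt, hx.2⟩
          have := hPpos x (hsin2 x hx2)
          rw [hPb₁]; linarith
      have hder : HasDerivAt P (ε * (0 + β * (Real.cos (2 * b₁) * 2) +
          γ * (-Real.sin (2 * b₁) * 2))) b₁ := by
        have h2x : HasDerivAt (fun y : ℝ => 2 * y) 2 b₁ := by
          simpa using (hasDerivAt_id b₁).const_mul 2
        have hsd : HasDerivAt (fun y : ℝ => Real.sin (2 * y)) (Real.cos (2 * b₁) * 2) b₁ :=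
          (Real.hasDerivAt_sin (2 * b₁)).comp b₁ h2x
        have hcd : HasDerivAt (fun y : ℝ => Real.cos (2 * y)) (-Real.sin (2 * b₁) * 2) b₁ :=
          (Real.hasDerivAt_cos (2 * b₁)).comp b₁ h2x
        exact (((hasDerivAt_const b₁ α).add (hsd.const_mul β)).add (hcd.const_mul γ)).const_mul ε
      have hd0 : β * Real.cos (2 * b₁) - γ * Real.sin (2 * b₁) = 0 := by
        have hz := hmin.hasDerivAt_eq_zero hder
        rcases mul_eq_zero.1 hz with hc | hc
        · exact absurd hc hε0
        · linarith
      obtain ⟨hα, hβ, hγ⟩ := two_zeros0 hab₁ (by linarith [heq ▸ hlt]) (hQ0 a₁ hfa₁)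
        (hQ0 b₁ hfb₁) hd0
      apply hQt₀
      rw [hα, hβ, hγ]; ring
    · obtain ⟨hα, hβ, hγ⟩ := three_zeros0 hab₁ hlt3 (by linarith) (hQ0 a₁ hfa₁)
        (hQ0 b₁ hfb₁) (hQ0 a hfa)
      apply hQt₀
      rw [hα, hβ, hγ]; ring
  have keyb : b = b₁ := by
    rcases lt_trichotomy b b₁ with hh | hh | hh
    · have h3 := hgt₁ b ⟨key ▸ hab, hh⟩
      rw [hfb] at h3
      exact absurd h3 (lt_irrefl _)
    · exact hh
    · have h3 := hgt b₁ ⟨key ▸ hab₁, hh⟩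
      rw [hfb₁] at h3
      exact absurd h3 (lt_irrefl _)
  refine ⟨-m, ?_, ?_⟩
  · rw [hadef] at key; push_cast; linarith
  · rw [hbdef] at keyb; push_cast; linarith
private lemma moebius_cc {h : ℝ → ℝ} {M : Matrix (Fin 2) (Fin 2) ℝ}
    (hM : IsMoebiusLift h M) :
    ∃ (α β γ : ℝ) (cc : ℝ → ℝ), Continuous cc ∧ ∀ x, cc x ≠ 0 ∧
      Real.sin (h x - x) = cc x * (α + β * Real.sin (2 * x) + γ * Real.cos (2 * x)) := by
  obtain ⟨hhm, hhc, hhsurj, hπ, hdet, hcf⟩ := hM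
  have hAB : ∀ x, 0 < (M 0 0 * Real.sin x + M 0 1 * Real.cos x) ^ 2
      + (M 1 0 * Real.sin x + M 1 1 * Real.cos x) ^ 2 := by
    intro x
    obtain ⟨c, hc0, hs, hcs⟩ := hcf x
    rcases lt_or_eq_of_le (by positivity : (0:ℝ) ≤ (M 0 0 * Real.sin x + M 0 1 * Real.cos x) ^ 2
      + (M 1 0 * Real.sin x + M 1 1 * Real.cos x) ^ 2) with hlt | heq
    · exact hlt
    · exfalso
      have hA0 : M 0 0 * Real.sin x + M 0 1 * Real.cos x = 0 := by nlinarith [heq]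
      have hB0 : M 1 0 * Real.sin x + M 1 1 * Real.cos x = 0 := by nlinarith [heq]
      have hone := Real.sin_sq_add_cos_sq (h x)
      rw [hs, hcs, hA0, hB0] at hone
      simp at hone
  refine ⟨(M 0 1 - M 1 0) / 2, (M 0 0 - M 1 1) / 2, (M 0 1 + M 1 0) / 2,
    fun x => ((M 0 0 * Real.sin x + M 0 1 * Real.cos x) * Real.sin (h x)
        + (M 1 0 * Real.sin x + M 1 1 * Real.cos x) * Real.cos (h x))
      / ((M 0 0 * Real.sin x + M 0 1 * Real.cos x) ^ 2
        + (M 1 0 * Real.sin x + M 1 1 * Real.cos x) ^ 2), ?_, ?_⟩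
  · apply Continuous.div
    · fun_prop
    · fun_prop
    · exact fun x => (hAB x).ne'
  · intro x
    obtain ⟨c, hc0, hs, hcs⟩ := hcf x
    have h0 := hAB x
    have hcc : ((M 0 0 * Real.sin x + M 0 1 * Real.cos x) * Real.sin (h x)
        + (M 1 0 * Real.sin x + M 1 1 * Real.cos x) * Real.cos (h x))
      / ((M 0 0 * Real.sin x + M 0 1 * Real.cos x) ^ 2
        + (M 1 0 * Real.sin x + M 1 1 * Real.cos x) ^ 2) = c := by
      rw [hs, hcs]
      rw [div_eq_iff h0.ne']
      ring
    simp only [hcc]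
    refine ⟨hc0, ?_⟩
    rw [Real.sin_sub, hs, hcs, Real.sin_two_mul, Real.cos_two_mul]
    have hpyth := Real.sin_sq_add_cos_sq x
    linear_combination (-(c * M 1 0)) * hpyth
private lemma range_gt {φ h : ℝ → ℝ} (hm : StrictMono φ)
    (hq : ∀ x, φ (x + 1) = h (φ x)) : ∀ t ∈ Set.range φ, t < h t := by
  rintro t ⟨x, rfl⟩
  rw [← hq x]
  exact hm (by linarith)

private lemma all_gt_of_not_bdd {φ h : ℝ → ℝ} (hm : StrictMono φ) (hc : Continuous φ)
    (hπ : ∀ x, h (x + π) = h x + π) (hq : ∀ x, φ (x + 1) = h (φ x))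
    (hbd : ¬ BddAbove (Set.range φ) ∨ ¬ BddBelow (Set.range φ)) :
    ∀ t, t < h t := by
  have hgt := range_gt hm hq
  have hOC : (Set.range φ).OrdConnected := (isPreconnected_range hc).ordConnected
  rcases hbd with hub | hlb
  · intro t
    obtain ⟨k, hk⟩ := exists_nat_ge ((φ 0 - t) / π)
    have hk' : φ 0 ≤ t + ((k : ℤ) : ℝ) * π := by
      have := (div_le_iff₀ Real.pi_pos).1 hk
      push_cast
      linarith
    obtain ⟨s, hs, hys⟩ := not_bddAbove_iff.1 hub (t + ((k : ℤ) : ℝ) * π)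
    have hmem : t + ((k : ℤ) : ℝ) * π ∈ Set.range φ :=
      hOC.out (Set.mem_range_self 0) hs ⟨hk', le_of_lt hys⟩
    have h3 := hgt _ hmem
    rw [h_int0 hπ (k : ℤ) t] at h3
    linarith
  · intro t
    obtain ⟨k, hk⟩ := exists_nat_ge ((t - φ 0) / π)
    have hk' : t + ((-(k : ℤ) : ℤ) : ℝ) * π ≤ φ 0 := by
      have := (div_le_iff₀ Real.pi_pos).1 hk
      push_cast
      linarith
    obtain ⟨s, hs, hys⟩ := not_bddBelow_iff.1 hlb (t + ((-(k : ℤ) : ℤ) : ℝ) * π)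
    have hmem : t + ((-(k : ℤ) : ℤ) : ℝ) * π ∈ Set.range φ :=
      hOC.out hs (Set.mem_range_self 0) ⟨le_of_lt hys, hk'⟩
    have h3 := hgt _ hmem
    rw [h_int0 hπ (-(k : ℤ)) t] at h3
    linarith

private lemma himg_eq {φ h : ℝ → ℝ} (hq : ∀ x, φ (x + 1) = h (φ x)) :
    h '' Set.range φ = Set.range φ := by
  have hcomp : h ∘ φ = φ ∘ (· + 1) := funext fun x => (hq x).symm
  calc h '' Set.range φ = Set.range (h ∘ φ) := (Set.range_comp h φ).symm
    _ = Set.range (φ ∘ (· + 1)) := by rw [hcomp]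
    _ = Set.range φ := Function.Surjective.range_comp (fun y => ⟨y - 1, by ring⟩) φ

private lemma range_univ' {φ h : ℝ → ℝ} (hc : Continuous φ) (hm : StrictMono φ)
    (hhm : StrictMono h) (hhc : Continuous h)
    (hq : ∀ x, φ (x + 1) = h (φ x)) (hall : ∀ t, t < h t) :
    Function.Surjective φ := by
  have hne : (Set.range φ).Nonempty := ⟨φ 0, Set.mem_range_self 0⟩
  have hOC : (Set.range φ).OrdConnected := (isPreconnected_range hc).ordConnected
  have hub : ¬ BddAbove (Set.range φ) := by
    intro hbdd
    have h1 := Monotone.map_csSup_of_continuousAt hhc.continuousAt hhm.monotone hne hbdd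
    rw [himg_eq hq] at h1
    exact absurd h1 (ne_of_gt (hall _))
  have hlb : ¬ BddBelow (Set.range φ) := by
    intro hbdd
    have h1 := Monotone.map_csInf_of_continuousAt hhc.continuousAt hhm.monotone hne hbdd
    rw [himg_eq hq] at h1
    exact absurd h1 (ne_of_gt (hall _))
  intro y
  obtain ⟨s, hs, hys⟩ := not_bddAbove_iff.1 hub y
  obtain ⟨s', hs', hys'⟩ := not_bddBelow_iff.1 hlb y
  exact hOC.out hs' hs ⟨le_of_lt hys', le_of_lt hys⟩

private lemma range_Ioo {φ h : ℝ → ℝ} (hc : Continuous φ) (hm : StrictMono φ)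
    (hhm : StrictMono h) (hhc : Continuous h) (hπ : ∀ x, h (x + π) = h x + π)
    (hq : ∀ x, φ (x + 1) = h (φ x)) {p : ℝ} (hp : h p ≤ p) :
    ∃ a b : ℝ, h a = a ∧ h b = b ∧ a < b ∧ b ≤ a + π ∧ Set.range φ = Set.Ioo a b := by
  have hgt := range_gt hm hq
  have hne : (Set.range φ).Nonempty := ⟨φ 0, Set.mem_range_self 0⟩
  have hOC : (Set.range φ).OrdConnected := (isPreconnected_range hc).ordConnected
  have hub : BddAbove (Set.range φ) := by
    by_contra hub
    exact absurd (all_gt_of_not_bdd hm hc hπ hq (Or.inl hub) p) (not_lt.2 hp)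
  have hlb : BddBelow (Set.range φ) := by
    by_contra hlb
    exact absurd (all_gt_of_not_bdd hm hc hπ hq (Or.inr hlb) p) (not_lt.2 hp)
  set a := sInf (Set.range φ) with ha
  set b := sSup (Set.range φ) with hb
  have hfb : h b = b := by
    have h1 := Monotone.map_csSup_of_continuousAt hhc.continuousAt hhm.monotone hne hub
    rw [himg_eq hq] at h1
    exact h1
  have hfa : h a = a := by
    have h1 := Monotone.map_csInf_of_continuousAt hhc.continuousAt hhm.monotone hne hlb
    rw [himg_eq hq] at h1
    exact h1
  have hsub : Set.range φ ⊆ Set.Ioo a b := by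
    intro s hs
    have h1 : a ≤ s := csInf_le hlb hs
    have h2 : s ≤ b := le_csSup hub hs
    have hne1 : s ≠ a := by
      intro he
      have := hgt s hs
      rw [he, hfa] at this
      exact lt_irrefl a this
    have hne2 : s ≠ b := by
      intro he
      have := hgt s hs
      rw [he, hfb] at this
      exact lt_irrefl b this
    exact ⟨lt_of_le_of_ne h1 (Ne.symm hne1), lt_of_le_of_ne h2 hne2⟩
  have hsup : Set.Ioo a b ⊆ Set.range φ := by
    intro y hy
    obtain ⟨s, hs, h1⟩ := exists_lt_of_csInf_lt hne hy.1
    obtain ⟨s', hs', h2⟩ := exists_lt_of_lt_csSup hne hy.2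
    exact hOC.out hs hs' ⟨le_of_lt h1, le_of_lt h2⟩
  have heq : Set.range φ = Set.Ioo a b := Set.Subset.antisymm hsub hsup
  have hab : a < b := by
    obtain ⟨s, hs⟩ := hne
    have := hsub hs
    exact lt_trans this.1 this.2
  have hbpi : b ≤ a + π := by
    by_contra hbp
    push_neg at hbp
    have hmem : a + π ∈ Set.Ioo a b := ⟨by linarith [Real.pi_pos], hbp⟩
    have h3 := hgt _ (hsup hmem)
    rw [hπ a, hfa] at h3
    exact lt_irrefl _ h3
  exact ⟨a, b, hfa, hfb, hab, hbpi, heq⟩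

/-- Two developing maps `γᵢ = (sin φᵢ : cos φᵢ)` with the same lifted monodromy `h̃`
differ by a ℤ-equivariant diffeomorphism `F` of `ℝ`: `γ₂ = γ₁ ∘ F⁻¹`, i.e.
`φ₂ = φ₁ ∘ F⁻¹` up to a constant integer multiple of `π`. -/
theorem developing_maps_same_monodromy
    (φ₁ φ₂ h : ℝ → ℝ) (M : Matrix (Fin 2) (Fin 2) ℝ)
    (h1c : Continuous φ₁) (h1m : StrictMono φ₁)
    (h2c : Continuous φ₂) (h2m : StrictMono φ₂)
    (hM : IsMoebiusLift h M)
    (hq1 : ∀ x, φ₁ (x + 1) = h (φ₁ x))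
    (hq2 : ∀ x, φ₂ (x + 1) = h (φ₂ x)) :
    ∃ F G : ℝ → ℝ, Continuous F ∧ StrictMono F ∧
      (∀ x, F (G x) = x) ∧ (∀ x, G (F x) = x) ∧
      (∀ x, F (x + 1) = F x + 1) ∧
      ∃ n : ℤ, ∀ x, φ₂ x = φ₁ (G x) + n * π := by
  have hM' := hM
  obtain ⟨hhm, hhc, hhsurj, hπ, hdet, hcf⟩ := hM'
  have build : ∀ n : ℤ, (∀ x, ∃ y, φ₁ y = φ₂ x - n * π) →
      (∀ x, ∃ y, φ₂ y = φ₁ x + n * π) →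
      (∃ F G : ℝ → ℝ, Continuous F ∧ StrictMono F ∧
        (∀ x, F (G x) = x) ∧ (∀ x, G (F x) = x) ∧
        (∀ x, F (x + 1) = F x + 1) ∧
        ∃ n : ℤ, ∀ x, φ₂ x = φ₁ (G x) + n * π) := by
    intro n hn1 hn2
    choose G hG using hn1
    choose F hF using hn2
    have hFG : ∀ x, F (G x) = x := by
      intro x
      apply h2m.injective
      rw [hF, hG]
      ring
    have hGF : ∀ x, G (F x) = x := by
      intro x
      apply h1m.injective
      rw [hG, hF]
      ring
    have hFm : StrictMono F := by
      intro x y hxy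
      have h3 : φ₂ (F x) < φ₂ (F y) := by
        rw [hF, hF]
        have := h1m hxy
        linarith
      exact (h2m.lt_iff_lt).1 h3
    have hFsurj : Function.Surjective F := fun y => ⟨G y, hFG y⟩
    have hFc : Continuous F := by
      have h4 := OrderIso.continuous (StrictMono.orderIsoOfSurjective F hFm hFsurj)
      simpa using h4
    have hF1 : ∀ x, F (x + 1) = F x + 1 := by
      intro x
      apply h2m.injective
      rw [hF, hq1, hq2, hF]
      exact (h_int0 hπ n (φ₁ x)).symm
    exact ⟨F, G, hFc, hFm, hFG, hGF, hF1, n, fun x => by rw [hG]; ring⟩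
  by_cases hall : ∀ t, t < h t
  · have s1 := range_univ' h1c h1m hhm hhc hq1 hall
    have s2 := range_univ' h2c h2m hhm hhc hq2 hall
    refine build 0 (fun x => ?_) (fun x => ?_)
    · simpa using s1 (φ₂ x - ((0 : ℤ) : ℝ) * π)
    · simpa using s2 (φ₁ x + ((0 : ℤ) : ℝ) * π)
  · push_neg at hall
    obtain ⟨p, hp⟩ := hall
    obtain ⟨a₁, b₁, hfa₁, hfb₁, hab₁, hb₁pi, hr₁⟩ := range_Ioo h1c h1m hhm hhc hπ hq1 hp
    obtain ⟨a₂, b₂, hfa₂, hfb₂, hab₂, hb₂pi, hr₂⟩ := range_Ioo h2c h2m hhm hhc hπ hq2 hp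
    have hgt₁ : ∀ x ∈ Set.Ioo a₁ b₁, x < h x := by
      intro x hx
      exact range_gt h1m hq1 x (hr₁ ▸ hx)
    have hgt₂ : ∀ x ∈ Set.Ioo a₂ b₂, x < h x := by
      intro x hx
      exact range_gt h2m hq2 x (hr₂ ▸ hx)
    obtain ⟨n, hna, hnb⟩ := interval_unique0 hhm hπ (moebius_cc hM) hfa₁ hfb₁ hfa₂ hfb₂
      hab₁ hb₁pi hab₂ hb₂pi hgt₁ hgt₂
    apply build n
    · intro x
      have hx : φ₂ x ∈ Set.Ioo a₂ b₂ := hr₂ ▸ Set.mem_range_self x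
      have hmem : φ₂ x - (n : ℝ) * π ∈ Set.Ioo a₁ b₁ := by
        constructor
        · have := hx.1; rw [hna] at this; linarith
        · have := hx.2; rw [hnb] at this; linarith
      rw [← hr₁] at hmem
      exact hmem
    · intro x
      have hx : φ₁ x ∈ Set.Ioo a₁ b₁ := hr₁ ▸ Set.mem_range_self x
      have hmem : φ₁ x + (n : ℝ) * π ∈ Set.Ioo a₂ b₂ := by
        constructor
        · rw [hna]; linarith [hx.1]
        · rw [hnb]; linarith [hx.2]
      rw [← hr₂] at hmem
      exact hmem
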